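/- arXiv:1909.00802 — 2 statements merged into one kernel-verified Lean document; each statement's English description precedes it below -/
import Mathlib

section
/- Let f(x) = -x + b₀x^{q⁵} + b₁x^{q²} ∈ F_{q⁶}[x] with b₀,b₁ ≠ 0, α = b₁/b₀, and suppose dim_{F_q} ker f = 2. Then α^{q³+1} ≠ 1, and setting A = -α^{q³+1}/(1-α^{q³+1}), the quadratic Y² - (Tr_{q³/q}(A) - 1)Y + N_{q³/q}(A) = 0 has either one root in F_q or two roots in F_{q²}∖F_q. -/
set_option maxHeartbeats 2000000

/-- In a field `F` which is an algebra over a finite field `Fq` of cardinality `q`,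
any element fixed by the `q`-power map lies in the image of `Fq`. -/
lemma stmt17_aux_fixed {q : ℕ} {Fq F : Type*} [Field Fq] [Field F] [Algebra Fq F]
    [Fintype Fq] (hqcard : Fintype.card Fq = q) (hq1 : 1 < q) {t : F} (ht : t ^ q = t) :
    ∃ c : Fq, algebraMap Fq F c = t := by
  classical
  by_contra hcon
  push_neg at hcon
  have hroot : ∀ u : F, u ^ q = u →
      u ∈ (Polynomial.X ^ q - Polynomial.X : Polynomial F).roots := by
    intro u hu
    rw [Polynomial.mem_roots']
    constructor
    · intro h
      have h1 : (Polynomial.X ^ q - Polynomial.X : Polynomial F).coeff q = 1 := by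
        rw [Polynomial.coeff_sub, Polynomial.coeff_X_pow, if_pos rfl, Polynomial.coeff_X,
          if_neg (by omega : ¬ (1 = q))]
        ring
      rw [h] at h1
      simp at h1
    · simp [Polynomial.IsRoot, hu]
  set S : Finset F := insert t (Finset.univ.image (algebraMap Fq F)) with hS
  have hsub : S ⊆ (Polynomial.X ^ q - Polynomial.X : Polynomial F).roots.toFinset := by
    intro u hu
    rw [Multiset.mem_toFinset]
    rw [hS, Finset.mem_insert] at hu
    rcases hu with rfl | hu
    · exact hroot _ ht
    · obtain ⟨c, _, rfl⟩ := Finset.mem_image.mp hu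
      apply hroot
      rw [← map_pow]
      congr 1
      rw [← hqcard]
      exact FiniteField.pow_card c
  have hcard1 : S.card = q + 1 := by
    rw [hS, Finset.card_insert_of_notMem, Finset.card_image_of_injective _
      (algebraMap Fq F).injective, Finset.card_univ, hqcard]
    intro hmem
    obtain ⟨c, _, hc⟩ := Finset.mem_image.mp hmem
    exact hcon c hc
  have hcard2 : ((Polynomial.X ^ q - Polynomial.X : Polynomial F).roots.toFinset).card ≤ q := by
    refine le_trans (Multiset.toFinset_card_le _) (le_trans (Polynomial.card_roots' _) ?_)
    refine le_trans (Polynomial.natDegree_sub_le _ _) ?_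
    rw [Polynomial.natDegree_X_pow, Polynomial.natDegree_X]
    exact max_le le_rfl (by omega)
  have := Finset.card_le_card hsub
  omega

theorem stmt_17 (q : ℕ) (Fq F : Type*) [Field Fq] [Field F] [Algebra Fq F]
    [Fintype Fq] [Fintype F]
    (hq : Fintype.card Fq = q) (hF : Fintype.card F = q ^ 6)
    (b0 b1 : F) (hb0 : b0 ≠ 0) (hb1 : b1 ≠ 0)
    (α : F) (hα : α = b1 / b0)
    (A : F) (hA : A = -α ^ (q ^ 3 + 1) / (1 - α ^ (q ^ 3 + 1)))
    (f : F →ₗ[Fq] F)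
    (hf : ∀ x, f x = -x + b0 * x ^ q ^ 5 + b1 * x ^ q ^ 2)
    (hker : Module.finrank Fq (LinearMap.ker f) = 2) :
    α ^ (q ^ 3 + 1) ≠ 1 ∧
      ((∃ y : F, y ^ q = y ∧
          y ^ 2 - (A + A ^ q + A ^ q ^ 2 - 1) * y + A ^ (1 + q + q ^ 2) = 0 ∧
          ∀ z : F, z ^ 2 - (A + A ^ q + A ^ q ^ 2 - 1) * z + A ^ (1 + q + q ^ 2) = 0 →
            z = y) ∨
        (∃ y z : F, y ≠ z ∧
          y ^ 2 - (A + A ^ q + A ^ q ^ 2 - 1) * y + A ^ (1 + q + q ^ 2) = 0 ∧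
          z ^ 2 - (A + A ^ q + A ^ q ^ 2 - 1) * z + A ^ (1 + q + q ^ 2) = 0 ∧
          y ^ q ^ 2 = y ∧ y ^ q ≠ y ∧ z ^ q ^ 2 = z ∧ z ^ q ≠ z)) := by
  classical
  -- basic numerology
  have hq1 : 1 < q := hq ▸ Fintype.one_lt_card
  have hq0 : q ≠ 0 := by omega
  -- characteristic facts
  have hchar : CharP Fq (ringChar Fq) := ringChar.charP Fq
  obtain ⟨n, hp, hqpn⟩ := FiniteField.card Fq (ringChar Fq)
  haveI : Fact (Nat.Prime (ringChar Fq)) := ⟨hp⟩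
  haveI : CharP F (ringChar Fq) :=
    charP_of_injective_algebraMap (algebraMap Fq F).injective (ringChar Fq)
  rw [hq] at hqpn
  -- Frobenius-type additivity for the q-power map on F
  have haddq : ∀ a b : F, (a + b) ^ q = a ^ q + b ^ q := by
    intro a b; rw [hqpn]; exact add_pow_char_pow a b _ _
  have hsubq : ∀ a b : F, (a - b) ^ q = a ^ q - b ^ q := by
    intro a b; rw [hqpn]; exact sub_pow_char_pow a b _
  have hnegq : ∀ a : F, (-a) ^ q = -(a ^ q) := by
    intro a
    have h := hsubq 0 a
    simpa [zero_pow hq0] using h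
  have hpow6 : ∀ z : F, z ^ q ^ 6 = z := by
    intro z
    rw [← hF]
    exact FiniteField.pow_card z
  -- power shift helpers
  have hs1 : ∀ z : F, (z ^ q) ^ q = z ^ q ^ 2 := by
    intro z; rw [← pow_mul, show q * q = q ^ 2 by ring]
  have hs2 : ∀ z : F, (z ^ q ^ 2) ^ q = z ^ q ^ 3 := by
    intro z; rw [← pow_mul, show q ^ 2 * q = q ^ 3 by ring]
  have hs3 : ∀ z : F, (z ^ q ^ 3) ^ q = z ^ q ^ 4 := by
    intro z; rw [← pow_mul, show q ^ 3 * q = q ^ 4 by ring]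
  have hs4 : ∀ z : F, (z ^ q ^ 4) ^ q = z ^ q ^ 5 := by
    intro z; rw [← pow_mul, show q ^ 4 * q = q ^ 5 by ring]
  have hs5 : ∀ z : F, (z ^ q ^ 5) ^ q = z := by
    intro z; rw [← pow_mul, show q ^ 5 * q = q ^ 6 by ring]; exact hpow6 z
  -- kernel relations for any kernel element
  have hrel : ∀ z : F, z = b0 * z ^ q ^ 5 + b1 * z ^ q ^ 2 →
      (z ^ q = b0 ^ q * z + b1 ^ q * z ^ q ^ 3) ∧
      ((b0 * (b0 ^ q ^ 5 * b1 ^ q ^ 4 + b1 ^ q ^ 5 * b0 ^ q)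
          + b1 * (b0 ^ q * b0 ^ q ^ 2 + b1 ^ q ^ 2 * b1 ^ q ^ 4) - 1) * z
        + (b0 * (b0 ^ q ^ 4 * b0 ^ q ^ 5 + b1 ^ q ^ 5 * b1 ^ q)
          + b1 * (b0 ^ q ^ 2 * b1 ^ q + b1 ^ q ^ 2 * b0 ^ q ^ 4)) * z ^ q ^ 3 = 0) ∧
      ((b0 ^ q ^ 3 * (b0 ^ q * b0 ^ q ^ 2 + b1 ^ q ^ 2 * b1 ^ q ^ 4)
          + b1 ^ q ^ 3 * (b0 ^ q ^ 5 * b1 ^ q ^ 4 + b1 ^ q ^ 5 * b0 ^ q)) * z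
        + (b0 ^ q ^ 3 * (b0 ^ q ^ 2 * b1 ^ q + b1 ^ q ^ 2 * b0 ^ q ^ 4)
          + b1 ^ q ^ 3 * (b0 ^ q ^ 4 * b0 ^ q ^ 5 + b1 ^ q ^ 5 * b1 ^ q) - 1) * z ^ q ^ 3 = 0) := by
    intro z h0
    have h1 : z ^ q = b0 ^ q * z + b1 ^ q * z ^ q ^ 3 := by
      calc z ^ q = (b0 * z ^ q ^ 5 + b1 * z ^ q ^ 2) ^ q := by rw [← h0]
        _ = (b0 * z ^ q ^ 5) ^ q + (b1 * z ^ q ^ 2) ^ q := haddq _ _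
        _ = b0 ^ q * (z ^ q ^ 5) ^ q + b1 ^ q * (z ^ q ^ 2) ^ q := by rw [mul_pow, mul_pow]
        _ = b0 ^ q * z + b1 ^ q * z ^ q ^ 3 := by rw [hs5 z, hs2 z]
    have h2 : z ^ q ^ 2 = b0 ^ q ^ 2 * z ^ q + b1 ^ q ^ 2 * z ^ q ^ 4 := by
      calc z ^ q ^ 2 = (z ^ q) ^ q := (hs1 z).symm
        _ = (b0 ^ q * z + b1 ^ q * z ^ q ^ 3) ^ q := by rw [h1]
        _ = (b0 ^ q * z) ^ q + (b1 ^ q * z ^ q ^ 3) ^ q := haddq _ _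
        _ = (b0 ^ q) ^ q * z ^ q + (b1 ^ q) ^ q * (z ^ q ^ 3) ^ q := by rw [mul_pow, mul_pow]
        _ = b0 ^ q ^ 2 * z ^ q + b1 ^ q ^ 2 * z ^ q ^ 4 := by rw [hs1 b0, hs1 b1, hs3 z]
    have h3 : z ^ q ^ 3 = b0 ^ q ^ 3 * z ^ q ^ 2 + b1 ^ q ^ 3 * z ^ q ^ 5 := by
      calc z ^ q ^ 3 = (z ^ q ^ 2) ^ q := (hs2 z).symm
        _ = (b0 ^ q ^ 2 * z ^ q + b1 ^ q ^ 2 * z ^ q ^ 4) ^ q := by rw [h2]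
        _ = (b0 ^ q ^ 2 * z ^ q) ^ q + (b1 ^ q ^ 2 * z ^ q ^ 4) ^ q := haddq _ _
        _ = (b0 ^ q ^ 2) ^ q * (z ^ q) ^ q + (b1 ^ q ^ 2) ^ q * (z ^ q ^ 4) ^ q := by
              rw [mul_pow, mul_pow]
        _ = b0 ^ q ^ 3 * z ^ q ^ 2 + b1 ^ q ^ 3 * z ^ q ^ 5 := by
              rw [hs2 b0, hs2 b1, hs1 z, hs4 z]
    have h4 : z ^ q ^ 4 = b0 ^ q ^ 4 * z ^ q ^ 3 + b1 ^ q ^ 4 * z := by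
      calc z ^ q ^ 4 = (z ^ q ^ 3) ^ q := (hs3 z).symm
        _ = (b0 ^ q ^ 3 * z ^ q ^ 2 + b1 ^ q ^ 3 * z ^ q ^ 5) ^ q := by rw [h3]
        _ = (b0 ^ q ^ 3 * z ^ q ^ 2) ^ q + (b1 ^ q ^ 3 * z ^ q ^ 5) ^ q := haddq _ _
        _ = (b0 ^ q ^ 3) ^ q * (z ^ q ^ 2) ^ q + (b1 ^ q ^ 3) ^ q * (z ^ q ^ 5) ^ q := by
              rw [mul_pow, mul_pow]
        _ = b0 ^ q ^ 4 * z ^ q ^ 3 + b1 ^ q ^ 4 * z := by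
              rw [hs3 b0, hs3 b1, hs2 z, hs5 z]
    have h5 : z ^ q ^ 5 = b0 ^ q ^ 5 * z ^ q ^ 4 + b1 ^ q ^ 5 * z ^ q := by
      calc z ^ q ^ 5 = (z ^ q ^ 4) ^ q := (hs4 z).symm
        _ = (b0 ^ q ^ 4 * z ^ q ^ 3 + b1 ^ q ^ 4 * z) ^ q := by rw [h4]
        _ = (b0 ^ q ^ 4 * z ^ q ^ 3) ^ q + (b1 ^ q ^ 4 * z) ^ q := haddq _ _
        _ = (b0 ^ q ^ 4) ^ q * (z ^ q ^ 3) ^ q + (b1 ^ q ^ 4) ^ q * z ^ q := by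
              rw [mul_pow, mul_pow]
        _ = b0 ^ q ^ 5 * z ^ q ^ 4 + b1 ^ q ^ 5 * z ^ q := by rw [hs4 b0, hs4 b1, hs3 z]
    have hRR : z ^ q ^ 2 = (b0 ^ q * b0 ^ q ^ 2 + b1 ^ q ^ 2 * b1 ^ q ^ 4) * z
        + (b0 ^ q ^ 2 * b1 ^ q + b1 ^ q ^ 2 * b0 ^ q ^ 4) * z ^ q ^ 3 := by
      linear_combination h2 + b0 ^ q ^ 2 * h1 + b1 ^ q ^ 2 * h4
    have hRR5 : z ^ q ^ 5 = (b0 ^ q ^ 5 * b1 ^ q ^ 4 + b1 ^ q ^ 5 * b0 ^ q) * z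
        + (b0 ^ q ^ 4 * b0 ^ q ^ 5 + b1 ^ q ^ 5 * b1 ^ q) * z ^ q ^ 3 := by
      linear_combination h5 + b0 ^ q ^ 5 * h4 + b1 ^ q ^ 5 * h1
    refine ⟨h1, ?_, ?_⟩
    · linear_combination (-1 : F) * h0 - b0 * hRR5 - b1 * hRR
    · linear_combination (-1 : F) * h3 - b0 ^ q ^ 3 * hRR - b1 ^ q ^ 3 * hRR5
  -- extract two independent kernel elements
  haveI : Module.Finite Fq ↥(LinearMap.ker f) := Module.Finite.of_finite
  let bas : Module.Basis (Fin 2) Fq ↥(LinearMap.ker f) :=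
    Module.finBasisOfFinrankEq Fq ↥(LinearMap.ker f) hker
  have hli : LinearIndependent Fq ((LinearMap.ker f).subtype ∘ bas) :=
    bas.linearIndependent.map' (LinearMap.ker f).subtype (Submodule.ker_subtype _)
  obtain ⟨hXne, hsm⟩ := linearIndependent_fin2.mp hli
  set X : F := ((bas 1 : ↥(LinearMap.ker f)) : F) with hXdef
  set Y0 : F := ((bas 0 : ↥(LinearMap.ker f)) : F) with hY0def
  have hX0 : X ≠ 0 := hXne
  have hsm' : ∀ a : Fq, a • X ≠ Y0 := hsm
  have hmemX : f X = 0 := LinearMap.mem_ker.mp (bas 1).2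
  have hmemY : f Y0 = 0 := LinearMap.mem_ker.mp (bas 0).2
  have h0X : X = b0 * X ^ q ^ 5 + b1 * X ^ q ^ 2 := by
    have h := hf X
    rw [hmemX] at h
    linear_combination h
  have h0Y : Y0 = b0 * Y0 ^ q ^ 5 + b1 * Y0 ^ q ^ 2 := by
    have h := hf Y0
    rw [hmemY] at h
    linear_combination h
  obtain ⟨h1X, eqEX, eqVX⟩ := hrel X h0X
  obtain ⟨h1Y, eqEY, eqVY⟩ := hrel Y0 h0Y
  -- the independence lemma
  have lstar : ∀ a b : F, a * X + b * X ^ q ^ 3 = 0 → a * Y0 + b * Y0 ^ q ^ 3 = 0 →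
      a = 0 ∧ b = 0 := by
    intro a b hx hy
    by_cases hb : b = 0
    · subst hb
      refine ⟨?_, rfl⟩
      have hax : a * X = 0 := by linear_combination hx
      rcases mul_eq_zero.mp hax with h | h
      · exact h
      · exact absurd h hX0
    · exfalso
      have hX3 : X ^ q ^ 3 = -a / b * X := by
        field_simp
        linear_combination hx
      have hY3 : Y0 ^ q ^ 3 = -a / b * Y0 := by
        field_simp
        linear_combination hy
      have hXq : X ^ q = (b0 ^ q + b1 ^ q * (-a / b)) * X := by
        rw [h1X, hX3]; ring
      have hYq : Y0 ^ q = (b0 ^ q + b1 ^ q * (-a / b)) * Y0 := by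
        rw [h1Y, hY3]; ring
      have hrho : (b0 ^ q + b1 ^ q * (-a / b)) ≠ 0 := by
        intro h
        rw [h, zero_mul] at hXq
        exact hX0 ((pow_eq_zero_iff hq0).mp hXq)
      have ht : (Y0 * X⁻¹) ^ q = Y0 * X⁻¹ := by
        rw [mul_pow, inv_pow, hXq, hYq]
        calc (b0 ^ q + b1 ^ q * (-a / b)) * Y0 * ((b0 ^ q + b1 ^ q * (-a / b)) * X)⁻¹
            = ((b0 ^ q + b1 ^ q * (-a / b)) * (b0 ^ q + b1 ^ q * (-a / b))⁻¹) * (Y0 * X⁻¹) := by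
              rw [mul_inv]; ring
          _ = Y0 * X⁻¹ := by rw [mul_inv_cancel₀ hrho, one_mul]
      obtain ⟨c, hc⟩ := stmt17_aux_fixed hq hq1 ht
      exact hsm' c (by rw [Algebra.smul_def, hc, inv_mul_cancel_right₀ hX0])
  -- coefficient identities
  obtain ⟨rE1', rE2'⟩ := lstar _ _ eqEX eqEY
  obtain ⟨rV1', rV2'⟩ := lstar _ _ eqVX eqVY
  have rE1 : b0 * (b0 ^ q ^ 5 * b1 ^ q ^ 4 + b1 ^ q ^ 5 * b0 ^ q)
      + b1 * (b0 ^ q * b0 ^ q ^ 2 + b1 ^ q ^ 2 * b1 ^ q ^ 4) = 1 := by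
    linear_combination rE1'
  have rE2 : b0 * (b0 ^ q ^ 4 * b0 ^ q ^ 5 + b1 ^ q ^ 5 * b1 ^ q)
      + b1 * (b0 ^ q ^ 2 * b1 ^ q + b1 ^ q ^ 2 * b0 ^ q ^ 4) = 0 := by
    linear_combination rE2'
  have rV1 : b0 ^ q ^ 3 * (b0 ^ q * b0 ^ q ^ 2 + b1 ^ q ^ 2 * b1 ^ q ^ 4)
      + b1 ^ q ^ 3 * (b0 ^ q ^ 5 * b1 ^ q ^ 4 + b1 ^ q ^ 5 * b0 ^ q) = 0 := by
    linear_combination rV1'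
  have rV2 : b0 ^ q ^ 3 * (b0 ^ q ^ 2 * b1 ^ q + b1 ^ q ^ 2 * b0 ^ q ^ 4)
      + b1 ^ q ^ 3 * (b0 ^ q ^ 4 * b0 ^ q ^ 5 + b1 ^ q ^ 5 * b1 ^ q) = 1 := by
    linear_combination rV2'
  -- solve the 2x2 systems
  have rA : (b0 * b0 ^ q ^ 3 - b1 * b1 ^ q ^ 3) * (b0 ^ q * b0 ^ q ^ 2 + b1 ^ q ^ 2 * b1 ^ q ^ 4)
      = -(b1 ^ q ^ 3) := by
    linear_combination b0 * rV1 - b1 ^ q ^ 3 * rE1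
  have rB : (b0 * b0 ^ q ^ 3 - b1 * b1 ^ q ^ 3) * (b0 ^ q ^ 2 * b1 ^ q + b1 ^ q ^ 2 * b0 ^ q ^ 4)
      = b0 := by
    linear_combination b0 * rV2 - b1 ^ q ^ 3 * rE2
  have rC : (b0 * b0 ^ q ^ 3 - b1 * b1 ^ q ^ 3) * (b0 ^ q ^ 5 * b1 ^ q ^ 4 + b1 ^ q ^ 5 * b0 ^ q)
      = b0 ^ q ^ 3 := by
    linear_combination b0 ^ q ^ 3 * rE1 - b1 * rV1
  have rD : (b0 * b0 ^ q ^ 3 - b1 * b1 ^ q ^ 3) * (b0 ^ q ^ 4 * b0 ^ q ^ 5 + b1 ^ q ^ 5 * b1 ^ q)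
      = -b1 := by
    linear_combination b0 ^ q ^ 3 * rE2 - b1 * rV2
  -- delta0 is nonzero
  have hd0 : b0 * b0 ^ q ^ 3 - b1 * b1 ^ q ^ 3 ≠ 0 := by
    intro h
    rw [h, zero_mul] at rA
    exact pow_ne_zero (q ^ 3) hb1 (by linear_combination rA)
  -- the norm of delta is -1
  have hNeq : (b0 * b0 ^ q ^ 3 - b1 * b1 ^ q ^ 3) *
      ((b0 * b0 ^ q ^ 3 - b1 * b1 ^ q ^ 3) * (b0 ^ q * b0 ^ q ^ 4 - b1 ^ q * b1 ^ q ^ 4)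
        * (b0 ^ q ^ 2 * b0 ^ q ^ 5 - b1 ^ q ^ 2 * b1 ^ q ^ 5) + 1) = 0 := by
    linear_combination
      ((b0 * b0 ^ q ^ 3 - b1 * b1 ^ q ^ 3) * (b0 ^ q ^ 4 * b0 ^ q ^ 5 + b1 ^ q ^ 5 * b1 ^ q)) * rA
      - b1 ^ q ^ 3 * rD
      - ((b0 * b0 ^ q ^ 3 - b1 * b1 ^ q ^ 3) * (b0 ^ q ^ 5 * b1 ^ q ^ 4 + b1 ^ q ^ 5 * b0 ^ q)) * rB
      - b0 * rC
  have hN : (b0 * b0 ^ q ^ 3 - b1 * b1 ^ q ^ 3) * (b0 ^ q * b0 ^ q ^ 4 - b1 ^ q * b1 ^ q ^ 4)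
      * (b0 ^ q ^ 2 * b0 ^ q ^ 5 - b1 ^ q ^ 2 * b1 ^ q ^ 5) = -1 := by
    rcases mul_eq_zero.mp hNeq with h | h
    · exact absurd h hd0
    · linear_combination h
  -- Frobenius twists of rA and rC
  have rA1 : (b0 ^ q * b0 ^ q ^ 4 - b1 ^ q * b1 ^ q ^ 4)
      * (b0 ^ q ^ 2 * b0 ^ q ^ 3 + b1 ^ q ^ 3 * b1 ^ q ^ 5) = -(b1 ^ q ^ 4) := by
    have h := congrArg (fun w : F => w ^ q) rA
    simp only [hsubq, haddq, hnegq, mul_pow, hs1, hs2, hs3, hs4, hs5] at h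
    linear_combination h
  have rC1 : (b0 ^ q * b0 ^ q ^ 4 - b1 ^ q * b1 ^ q ^ 4)
      * (b0 * b1 ^ q ^ 5 + b1 * b0 ^ q ^ 2) = b0 ^ q ^ 4 := by
    have h := congrArg (fun w : F => w ^ q) rC
    simp only [hsubq, haddq, hnegq, mul_pow, hs1, hs2, hs3, hs4, hs5] at h
    linear_combination h
  have rC2 : (b0 ^ q ^ 2 * b0 ^ q ^ 5 - b1 ^ q ^ 2 * b1 ^ q ^ 5)
      * (b0 ^ q * b1 + b1 ^ q * b0 ^ q ^ 3) = b0 ^ q ^ 5 := by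
    have h := congrArg (fun w : F => w ^ q) rC1
    simp only [hsubq, haddq, hnegq, mul_pow, hs1, hs2, hs3, hs4, hs5] at h
    linear_combination h
  -- alpha power and nonvanishing
  have hαpow : α ^ (q ^ 3 + 1) = (b1 ^ q ^ 3 * b1) / (b0 ^ q ^ 3 * b0) := by
    rw [hα, div_pow, pow_add, pow_one, pow_add, pow_one]
  have hu1 : α ^ (q ^ 3 + 1) ≠ 1 := by
    intro h
    rw [hαpow] at h
    have hden : (b0 ^ q ^ 3 * b0 : F) ≠ 0 := mul_ne_zero (pow_ne_zero _ hb0) hb0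
    rw [div_eq_one_iff_eq hden] at h
    exact hd0 (by linear_combination -h)
  refine ⟨hu1, ?_⟩
  -- express A polynomially
  have hu_ne : (1 : F) - α ^ (q ^ 3 + 1) ≠ 0 := sub_ne_zero.mpr (Ne.symm hu1)
  have hA1 : A * (1 - α ^ (q ^ 3 + 1)) = -α ^ (q ^ 3 + 1) := by
    rw [hA, div_mul_cancel₀ _ hu_ne]
  have hAδ : A * (b0 * b0 ^ q ^ 3 - b1 * b1 ^ q ^ 3) = -(b1 * b1 ^ q ^ 3) := by
    rw [hαpow] at hA1
    field_simp at hA1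
    linear_combination hA1
  have hA_poly : A = b1 * b1 ^ q ^ 3
      * ((b0 ^ q * b0 ^ q ^ 4 - b1 ^ q * b1 ^ q ^ 4)
        * (b0 ^ q ^ 2 * b0 ^ q ^ 5 - b1 ^ q ^ 2 * b1 ^ q ^ 5)) := by
    have h : A = -(b1 * b1 ^ q ^ 3) / (b0 * b0 ^ q ^ 3 - b1 * b1 ^ q ^ 3) := by
      rw [eq_div_iff hd0]
      exact hAδ
    rw [h, div_eq_iff hd0]
    linear_combination (-(b1 * b1 ^ q ^ 3)) * hN
  -- Frobenius twists of hA_poly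
  have hAq : A ^ q = b1 ^ q * b1 ^ q ^ 4
      * ((b0 ^ q ^ 2 * b0 ^ q ^ 5 - b1 ^ q ^ 2 * b1 ^ q ^ 5)
        * (b0 * b0 ^ q ^ 3 - b1 * b1 ^ q ^ 3)) := by
    have h := congrArg (fun w : F => w ^ q) hA_poly
    simp only [hsubq, haddq, hnegq, mul_pow, hs1, hs2, hs3, hs4, hs5] at h
    linear_combination h
  have hAq2 : A ^ q ^ 2 = b1 ^ q ^ 2 * b1 ^ q ^ 5
      * ((b0 * b0 ^ q ^ 3 - b1 * b1 ^ q ^ 3)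
        * (b0 ^ q * b0 ^ q ^ 4 - b1 ^ q * b1 ^ q ^ 4)) := by
    have h := congrArg (fun w : F => w ^ q) hAq
    simp only [hsubq, haddq, hnegq, mul_pow, hs1, hs2, hs3, hs4, hs5] at h
    linear_combination h
  -- the key identity
  have key : (b1 * b1 ^ q ^ 2 * b1 ^ q ^ 4 + b1 ^ q * b1 ^ q ^ 3 * b1 ^ q ^ 5)
      * ((b0 * b0 ^ q ^ 3 - b1 * b1 ^ q ^ 3) * (b0 ^ q * b0 ^ q ^ 4 - b1 ^ q * b1 ^ q ^ 4)
        * (b0 ^ q ^ 2 * b0 ^ q ^ 5 - b1 ^ q ^ 2 * b1 ^ q ^ 5))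
      + (b1 * b1 ^ q ^ 3 * ((b0 ^ q * b0 ^ q ^ 4 - b1 ^ q * b1 ^ q ^ 4)
          * (b0 ^ q ^ 2 * b0 ^ q ^ 5 - b1 ^ q ^ 2 * b1 ^ q ^ 5))
        + b1 ^ q * b1 ^ q ^ 4 * ((b0 * b0 ^ q ^ 3 - b1 * b1 ^ q ^ 3)
          * (b0 ^ q ^ 2 * b0 ^ q ^ 5 - b1 ^ q ^ 2 * b1 ^ q ^ 5))
        + b1 ^ q ^ 2 * b1 ^ q ^ 5 * ((b0 * b0 ^ q ^ 3 - b1 * b1 ^ q ^ 3)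
          * (b0 ^ q * b0 ^ q ^ 4 - b1 ^ q * b1 ^ q ^ 4)))
      + (b0 * b0 ^ q ^ 3 - b1 * b1 ^ q ^ 3) * (b0 ^ q * b0 ^ q ^ 4 - b1 ^ q * b1 ^ q ^ 4)
        * (b0 ^ q ^ 2 * b0 ^ q ^ 5 - b1 ^ q ^ 2 * b1 ^ q ^ 5) = 0 := by
    linear_combination
      (b1 * (b0 ^ q * b0 ^ q ^ 4 - b1 ^ q * b1 ^ q ^ 4)
        * (b0 ^ q ^ 2 * b0 ^ q ^ 5 - b1 ^ q ^ 2 * b1 ^ q ^ 5)) * rA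
      + (b1 ^ q * (b0 * b0 ^ q ^ 3 - b1 * b1 ^ q ^ 3)
        * (b0 ^ q ^ 2 * b0 ^ q ^ 5 - b1 ^ q ^ 2 * b1 ^ q ^ 5)) * rA1
      - (b0 ^ q ^ 2 * (b0 * b0 ^ q ^ 3 - b1 * b1 ^ q ^ 3)
        * (b0 ^ q * b0 ^ q ^ 4 - b1 ^ q * b1 ^ q ^ 4)) * rC2
  -- trace and norm conditions for the explicit root
  have hsum : A + A ^ q + A ^ q ^ 2 - 1
      = b1 * b1 ^ q ^ 2 * b1 ^ q ^ 4 + b1 ^ q * b1 ^ q ^ 3 * b1 ^ q ^ 5 := by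
    rw [hAq2, hAq, hA_poly]
    linear_combination key
      - (b1 * b1 ^ q ^ 2 * b1 ^ q ^ 4 + b1 ^ q * b1 ^ q ^ 3 * b1 ^ q ^ 5 + 1) * hN
  have hprodA : A ^ (1 + q + q ^ 2)
      = (b1 * b1 ^ q ^ 2 * b1 ^ q ^ 4) * (b1 ^ q * b1 ^ q ^ 3 * b1 ^ q ^ 5) := by
    rw [pow_add, pow_add, pow_one, hAq2, hAq, hA_poly]
    linear_combination (b1 * b1 ^ q * b1 ^ q ^ 2 * b1 ^ q ^ 3 * b1 ^ q ^ 4 * b1 ^ q ^ 5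
      * ((b0 * b0 ^ q ^ 3 - b1 * b1 ^ q ^ 3) * (b0 ^ q * b0 ^ q ^ 4 - b1 ^ q * b1 ^ q ^ 4)
        * (b0 ^ q ^ 2 * b0 ^ q ^ 5 - b1 ^ q ^ 2 * b1 ^ q ^ 5) - 1)) * hN
  -- root data
  have hyq : (b1 * b1 ^ q ^ 2 * b1 ^ q ^ 4) ^ q = b1 ^ q * b1 ^ q ^ 3 * b1 ^ q ^ 5 := by
    rw [mul_pow, mul_pow, hs2 b1, hs4 b1]
  have hyq2 : (b1 * b1 ^ q ^ 2 * b1 ^ q ^ 4) ^ q ^ 2 = b1 * b1 ^ q ^ 2 * b1 ^ q ^ 4 := by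
    rw [← hs1 (b1 * b1 ^ q ^ 2 * b1 ^ q ^ 4), hyq, mul_pow, mul_pow, hs1 b1, hs3 b1, hs5 b1]
    ring
  set Y : F := b1 * b1 ^ q ^ 2 * b1 ^ q ^ 4 with hYdef
  by_cases hc : Y ^ q = Y
  · left
    refine ⟨Y, hc, ?_, ?_⟩
    · linear_combination (-Y) * hsum + hprodA
    · intro z hz
      have h2 : (z - Y) ^ 2 = 0 := by
        linear_combination hz + z * hsum - z * hyq + z * hc - hprodA - Y * hc + Y * hyq
      have h3 : z - Y = 0 := (pow_eq_zero_iff (by norm_num : (2 : ℕ) ≠ 0)).mp h2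
      exact sub_eq_zero.mp h3
  · right
    refine ⟨Y, Y ^ q, fun h => hc h.symm, ?_, ?_, hyq2, hc, ?_, ?_⟩
    · linear_combination (-Y) * hsum + hprodA
    · linear_combination (-(Y ^ q)) * hsum + hprodA + (Y ^ q - Y) * hyq
    · calc (Y ^ q) ^ q ^ 2 = (Y ^ q ^ 2) ^ q := by
            rw [← pow_mul, ← pow_mul, mul_comm]
        _ = Y ^ q := by rw [hyq2]
    · intro h
      have h' : Y ^ q ^ 2 = Y ^ q := by
        rw [show q ^ 2 = q * q by ring, pow_mul]
        exact h
      exact hc (h'.symm.trans hyq2)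
end

section
/- Let F(x) = a₀x^σ + a₁x^{σq^n} + ... + a_{t-1}x^{σq^{n(t-1)}} over F_{q^{nt}}, with σ a generator of Gal(F_{q^n}/F_q), G(x) = Σ a_i x^{q^{ni}}, and let L_F = {⟨(x,F(x))⟩_{F_{q^{nt}}} : x ∈ F_{q^{nt}}*} be the associated F_q-linear set of PG(1, q^{nt}). Then the weight of the point ⟨(1,0)⟩ equals n·dim_{F_{q^n}} ker G, and every other point of L_F has weight between 1 and t - dim_{F_{q^n}} ker G. -/
open Module

lemma fixed_lemma {Fq Fqn : Type*} [Field Fq] [Field Fqn] [Algebra Fq Fqn]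
    [Finite Fqn] {n : ℕ} (hn : Module.finrank Fq Fqn = n)
    (σ' : Fqn ≃ₐ[Fq] Fqn) (hord : orderOf σ' = n)
    {c : Fqn} (hc : σ' c = c) : ∃ b : Fq, algebraMap Fq Fqn b = c := by
  have hfd : FiniteDimensional Fq Fqn := Module.Finite.of_finite
  have htop : Subgroup.zpowers σ' = ⊤ := by
    rw [← Subgroup.card_eq_iff_eq_top, Nat.card_zpowers, hord,
      IsGalois.card_aut_eq_finrank, hn]
  have hbot : IntermediateField.fixedField (⊤ : Subgroup (Fqn ≃ₐ[Fq] Fqn)) = ⊥ :=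
    ((IsGalois.tfae (F := Fq) (E := Fqn)).out 0 1).mp (inferInstance : IsGalois Fq Fqn)
  have hstab : (⊤ : Subgroup (Fqn ≃ₐ[Fq] Fqn)) ≤ MulAction.stabilizer (Fqn ≃ₐ[Fq] Fqn) c := by
    rw [← htop]
    exact Subgroup.zpowers_le.mpr hc
  have hmem : c ∈ IntermediateField.fixedField (⊤ : Subgroup (Fqn ≃ₐ[Fq] Fqn)) := by
    intro g
    exact hstab g.2
  rw [hbot] at hmem
  exact IntermediateField.mem_bot.mp hmem

lemma indep_lemma {Fq Fqn F : Type*} [Field Fq] [Field Fqn] [Field F]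
    [Algebra Fq Fqn] [Algebra Fqn F] [Algebra Fq F] [IsScalarTower Fq Fqn F]
    (σ : F ≃ₐ[Fq] F) (σ' : Fqn ≃ₐ[Fq] Fqn)
    (hres : ∀ c : Fqn, σ (algebraMap Fqn F c) = algebraMap Fqn F (σ' c))
    (hfix : ∀ c : Fqn, σ' c = c → ∃ b : Fq, algebraMap Fq Fqn b = c)
    (G : F →ₗ[Fqn] F) (m : F) (hm : m ≠ 0)
    {ι : Type*} [Fintype ι] (x : ι → F) (hxE : ∀ i, G (σ (x i)) = m * x i)
    (hx : LinearIndependent Fq x) : LinearIndependent Fqn x := by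
  classical
  have key : ∀ (d : Fqn) (z : F), σ (d • z) = σ' d • σ z := by
    intro d z
    rw [Algebra.smul_def, map_mul, hres, Algebra.smul_def]
  rw [Fintype.linearIndependent_iff]
  suffices H : ∀ N (c : ι → Fqn), (Finset.univ.filter fun i => c i ≠ 0).card ≤ N →
      ∑ i, c i • x i = 0 → ∀ i, c i = 0 from fun c hc => H _ c le_rfl hc
  intro N
  induction N with
  | zero =>
    intro c hc hsum i
    by_contra h
    have hi : i ∈ Finset.univ.filter fun i => c i ≠ 0 := by simp [h]
    have := Finset.card_pos.mpr ⟨i, hi⟩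
    omega
  | succ N ih =>
    intro c hc hsum
    by_cases hc0 : ∀ i, c i = 0
    · exact hc0
    push_neg at hc0
    obtain ⟨j, hj⟩ := hc0
    exfalso
    have h1 : ∑ i, σ' (c i) • σ (x i) = 0 := by
      have h := congrArg σ hsum
      rw [map_sum, map_zero] at h
      simpa [key] using h
    have h2 : ∑ i, σ' (c i) • x i = 0 := by
      have h := congrArg G h1
      rw [map_sum, map_zero] at h
      have hmul : m * ∑ i, σ' (c i) • x i = 0 := by
        rw [Finset.mul_sum, ← h]
        refine Finset.sum_congr rfl fun i _ => ?_
        rw [map_smul, hxE, mul_smul_comm]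
      rcases mul_eq_zero.mp hmul with h' | h'
      · exact absurd h' hm
      · exact h'
    set e : ι → Fqn := fun i => σ' (c j) * c i - c j * σ' (c i) with he
    have hesum : ∑ i, e i • x i = 0 := by
      simp only [he, sub_smul, mul_smul, Finset.sum_sub_distrib, ← Finset.smul_sum, hsum, h2,
        smul_zero, sub_zero]
    have hesub : (Finset.univ.filter fun i => e i ≠ 0) ⊆
        (Finset.univ.filter fun i => c i ≠ 0).erase j := by
      intro i hi
      simp only [Finset.mem_filter, Finset.mem_univ, true_and, ne_eq] at hi
      rw [Finset.mem_erase]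
      refine ⟨?_, ?_⟩
      · rintro rfl; exact hi (by simp [he, mul_comm])
      · simp only [Finset.mem_filter, Finset.mem_univ, true_and, ne_eq]
        intro h0; exact hi (by simp [he, h0])
    have hecard : (Finset.univ.filter fun i => e i ≠ 0).card ≤ N := by
      have hjmem : j ∈ Finset.univ.filter fun i => c i ≠ 0 := by simp [hj]
      have h1' := Finset.card_le_card hesub
      have h2' := Finset.card_erase_of_mem hjmem
      have h3' := Finset.card_pos.mpr ⟨j, hjmem⟩
      omega
    have he0 := ih e hecard hesum
    have hcj' : σ' (c j) ≠ 0 := fun h => hj (by simpa using σ'.injective (h.trans (map_zero σ').symm))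
    have hfix' : ∀ i, ∃ b : Fq, algebraMap Fq Fqn b = c i / c j := by
      intro i
      apply hfix
      have hi := he0 i
      rw [he, sub_eq_zero] at hi
      rw [map_div₀, div_eq_div_iff hcj' hj]
      linear_combination -hi
    choose b hb using hfix'
    have hbsum : ∑ i, b i • x i = 0 := by
      have step : ∀ i, b i • x i = (c j)⁻¹ • (c i • x i) := by
        intro i
        rw [← algebraMap_smul Fqn (b i) (x i), hb, div_eq_inv_mul, mul_smul]
      calc ∑ i, b i • x i = (c j)⁻¹ • ∑ i, c i • x i := by
            rw [Finset.smul_sum]; exact Finset.sum_congr rfl fun i _ => step i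
        _ = 0 := by rw [hsum, smul_zero]
    have hbj := Fintype.linearIndependent_iff.mp hx b hbsum j
    have : algebraMap Fq Fqn (b j) = 1 := by rw [hb]; exact div_self hj
    rw [hbj, map_zero] at this
    exact zero_ne_one this

theorem stmt_18 (q n t : ℕ) (Fq Fqn F : Type*) [Field Fq] [Field Fqn] [Field F]
    [Algebra Fq Fqn] [Algebra Fqn F] [Algebra Fq F] [IsScalarTower Fq Fqn F]
    [Fintype Fq] [Fintype Fqn] [Fintype F]
    (hq : Fintype.card Fq = q) (hqn : Fintype.card Fqn = q ^ n)
    (hF : Fintype.card F = q ^ (n * t))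
    (σ : F ≃ₐ[Fq] F) (σ' : Fqn ≃ₐ[Fq] Fqn) (hord : orderOf σ' = n)
    (hres : ∀ c : Fqn, σ (algebraMap Fqn F c) = algebraMap Fqn F (σ' c))
    (a : Fin t → F)
    (G : F →ₗ[Fqn] F)
    (hG : ∀ x, G x = ∑ i : Fin t, a i * x ^ q ^ (n * (i : ℕ)))
    (Fl : F →ₗ[Fq] F)
    (hFl : ∀ x, Fl x = ∑ i : Fin t, a i * σ x ^ q ^ (n * (i : ℕ)))
    (fm : F → (F →ₗ[Fq] F))
    (hfm : ∀ m x, fm m x = Fl x - m * x) :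
    Module.finrank Fq (LinearMap.ker Fl) = n * Module.finrank Fqn (LinearMap.ker G) ∧
      ∀ m : F, m ≠ 0 → (∃ x : F, x ≠ 0 ∧ Fl x = m * x) →
        1 ≤ Module.finrank Fq (LinearMap.ker (fm m)) ∧
          Module.finrank Fq (LinearMap.ker (fm m)) ≤
            t - Module.finrank Fqn (LinearMap.ker G) := by
  classical
  have hq2 : 1 < q := hq ▸ Fintype.one_lt_card
  have hn0 : 0 < n := by
    rcases Nat.eq_zero_or_pos n with h | h
    · subst h
      rw [pow_zero] at hqn
      exact absurd (hqn ▸ Fintype.one_lt_card) (lt_irrefl 1)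
    · exact h
  have hrk_qn : Module.finrank Fq Fqn = n := by
    have h1 : Fintype.card Fqn = Fintype.card Fq ^ Module.finrank Fq Fqn := card_eq_pow_finrank
    rw [hqn, hq] at h1
    exact (Nat.pow_right_injective hq2 h1).symm
  have hrkF_qn : Module.finrank Fqn F = t := by
    have h1 : Fintype.card F = Fintype.card Fqn ^ Module.finrank Fqn F := card_eq_pow_finrank
    rw [hqn, hF, ← pow_mul] at h1
    have h2 := Nat.pow_right_injective hq2 h1
    exact (Nat.eq_of_mul_eq_mul_left hn0 h2).symm
  have hFlG : ∀ z, Fl z = G (σ z) := fun z => by rw [hFl, hG]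
  -- part 1
  have hker1 : Module.finrank Fq (LinearMap.ker Fl) =
      Module.finrank Fq ((LinearMap.ker G).restrictScalars Fq) := by
    have hmap : (LinearMap.ker Fl).map (σ.toLinearEquiv : F →ₗ[Fq] F) =
        (LinearMap.ker G).restrictScalars Fq := by
      ext y
      simp only [Submodule.mem_map, LinearMap.mem_ker, Submodule.restrictScalars_mem]
      constructor
      · rintro ⟨z, hz, rfl⟩
        rw [hFlG] at hz
        simpa using hz
      · intro hy
        refine ⟨σ.symm y, ?_, by simp⟩
        rw [hFlG, AlgEquiv.apply_symm_apply]
        exact hy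
    exact LinearEquiv.finrank_eq (LinearEquiv.ofSubmodules _ _ _ hmap)
  have hker2 : Module.finrank Fq ((LinearMap.ker G).restrictScalars Fq) =
      n * Module.finrank Fqn (LinearMap.ker G) := by
    rw [LinearEquiv.finrank_eq ((Submodule.restrictScalarsEquiv Fq Fqn F (LinearMap.ker G)).restrictScalars Fq),
      ← Module.finrank_mul_finrank Fq Fqn ↥(LinearMap.ker G), hrk_qn]
  refine ⟨hker1.trans hker2, ?_⟩
  rintro m hm ⟨x0, hx0, hx0e⟩
  have hmemE : ∀ z : F, z ∈ LinearMap.ker (fm m) ↔ G (σ z) = m * z := by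
    intro z
    rw [LinearMap.mem_ker, hfm, sub_eq_zero, hFlG]
  constructor
  · have hne : (⟨x0, (hmemE x0).mpr (hFlG x0 ▸ hx0e)⟩ : LinearMap.ker (fm m)) ≠ 0 := by
      intro h
      exact hx0 (by simpa using congrArg Subtype.val h)
    have : Nontrivial (LinearMap.ker (fm m)) := nontrivial_of_ne _ 0 hne
    exact Module.finrank_pos
  · set k := Module.finrank Fq (LinearMap.ker (fm m)) with hk
    let b := Module.finBasis Fq (LinearMap.ker (fm m))
    set x : Fin k → F := fun i => ((b i : LinearMap.ker (fm m)) : F) with hxdef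
    have hxE : ∀ i, G (σ (x i)) = m * x i := fun i => (hmemE _).mp (b i).2
    have hxi : LinearIndependent Fq x :=
      b.linearIndependent.map' (LinearMap.ker (fm m)).subtype (Submodule.ker_subtype _)
    have hfix : ∀ c : Fqn, σ' c = c → ∃ bb : Fq, algebraMap Fq Fqn bb = c :=
      fun c hc => fixed_lemma hrk_qn σ' hord hc
    have hXqn : LinearIndependent Fqn x := indep_lemma σ σ' hres hfix G m hm x hxE hxi
    have key : ∀ (d : Fqn) (z : F), σ (d • z) = σ' d • σ z := by
      intro d z
      rw [Algebra.smul_def, map_mul, hres, Algebra.smul_def]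
    have hY : LinearIndependent Fqn (fun i => σ (x i)) := by
      rw [Fintype.linearIndependent_iff]
      intro c hc i
      have h0 : σ (∑ i, σ'.symm (c i) • x i) = 0 := by
        rw [map_sum]
        simpa [key] using hc
      have h1 : ∑ i, σ'.symm (c i) • x i = 0 := by
        apply σ.injective
        rw [h0, map_zero]
      have h2 := Fintype.linearIndependent_iff.mp hXqn _ h1 i
      have := congrArg σ' h2
      simpa using this
    set W := Submodule.span Fqn (Set.range fun i => σ (x i)) with hW
    have hWrank : Module.finrank Fqn W = k := by
      rw [hW, finrank_span_eq_card hY, Fintype.card_fin]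
    have hdisj : W ⊓ LinearMap.ker G = ⊥ := by
      rw [eq_bot_iff]
      rintro w ⟨hw1, hw2⟩
      obtain ⟨c, rfl⟩ := (Submodule.mem_span_range_iff_exists_fun Fqn).mp hw1
      simp only [SetLike.mem_coe, LinearMap.mem_ker, map_sum] at hw2
      have hGw : m * ∑ i, c i • x i = 0 := by
        rw [Finset.mul_sum, ← hw2]
        refine Finset.sum_congr rfl fun i _ => ?_
        rw [map_smul, hxE, mul_smul_comm]
      have hsum0 : ∑ i, c i • x i = 0 := by
        rcases mul_eq_zero.mp hGw with h' | h'
        · exact absurd h' hm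
        · exact h'
      have hc0 := Fintype.linearIndependent_iff.mp hXqn c hsum0
      simp only [Submodule.mem_bot]
      exact Finset.sum_eq_zero fun i _ => by rw [hc0 i, zero_smul]
    have hsup := Submodule.finrank_sup_add_finrank_inf_eq W (LinearMap.ker G)
    rw [hdisj, finrank_bot, add_zero] at hsup
    have hle : Module.finrank Fqn ↥(W ⊔ LinearMap.ker G) ≤ t := by
      rw [← hrkF_qn]
      exact Submodule.finrank_le _
    rw [hWrank] at hsup
    omega
end
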